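/- Let K ⊆ ℝ^n be an isotropic convex body with isotropic constant L_K, and let x ∈ ℝ^n satisfy ‖x‖ ≥ 4L_K. Then vol(K ∩ (K + x)) ≤ 3^{−‖x‖/(8L_K)}. -/

import Mathlib

open MeasureTheory RealInnerProductSpace
open Set Pointwise ENNReal NNReal

lemma sumset_one_dim (A B : Set ℝ) (hA : IsCompact A) (hB : IsCompact B)
    (hAne : A.Nonempty) (hBne : B.Nonempty) :
    volume A + volume B ≤ volume (A + B) := by
  obtain ⟨a, haA, ha⟩ : ∃ a ∈ A, ∀ x ∈ A, x ≤ a := hA.exists_isGreatest hAne |>.imp fun a h => ⟨h.1, fun x hx => h.2 hx⟩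
  obtain ⟨b, hbB, hb⟩ : ∃ b ∈ B, ∀ y ∈ B, b ≤ y := hB.exists_isLeast hBne |>.imp fun b h => ⟨h.1, fun y hy => h.2 hy⟩
  set U : Set ℝ := (· + b) '' A with hU
  set V : Set ℝ := (a + ·) '' B with hV
  have hUV : U ∪ V ⊆ A + B := by
    rintro z (⟨x, hx, rfl⟩ | ⟨y, hy, rfl⟩)
    · exact add_mem_add hx hbB
    · exact add_mem_add haA hy
  have hUmeas : MeasurableSet U := ((Homeomorph.addRight b).isCompact_image.2 hA).measurableSet
  have hinter : U ∩ V ⊆ {a + b} := by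
    rintro z ⟨⟨x, hx, rfl⟩, ⟨y, hy, hyz⟩⟩
    have h1 : x + b ≤ a + b := by have := ha x hx; linarith
    simp only at hyz
    have h2 : a + b ≤ x + b := by have := hb y hy; linarith
    simp [le_antisymm h1 h2]
  have hvolU : volume U = volume A := by
    rw [hU, Set.image_add_right, measure_preimage_add_right]
  have hvolV : volume V = volume B := by
    rw [hV, Set.image_add_left, measure_preimage_add]
  have hinter0 : volume (U ∩ V) = 0 :=
    le_antisymm ((measure_mono hinter).trans (by simp)) (zero_le)
  have := measure_union_add_inter' (μ := volume) (s := U) hUmeas V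
  have hle : volume U + volume V ≤ volume (U ∪ V) := by
    rw [← this, hinter0, add_zero]
  calc volume A + volume B = volume U + volume V := by rw [hvolU, hvolV]
    _ ≤ volume (U ∪ V) := hle
    _ ≤ volume (A + B) := measure_mono hUV

lemma sumset_scaled (l : ℝ) (hl0 : 0 < l) (hl1 : l < 1) (A B D : Set ℝ)
    (hAm : MeasurableSet A) (hBm : MeasurableSet B) (hDm : MeasurableSet D)
    (hAne : A.Nonempty) (hBne : B.Nonempty)
    (hAfin : volume A ≠ ⊤) (hBfin : volume B ≠ ⊤)
    (hincl : ∀ x ∈ A, ∀ y ∈ B, l * x + (1 - l) * y ∈ D) :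
    ENNReal.ofReal l * volume A + ENNReal.ofReal (1 - l) * volume B ≤ volume D := by
  rcases eq_or_ne (volume D) ⊤ with hD | hD
  · rw [hD]; exact le_top
  refine ENNReal.le_of_forall_pos_le_add fun ε hε _ => ?_
  have hε2 : ((ε : ℝ≥0∞) / 2) ≠ 0 := by
    simp [ENNReal.div_eq_zero_iff, hε.ne']
  obtain ⟨K1, hK1A, hK1c, hK1v⟩ := hAm.exists_isCompact_lt_add hAfin hε2
  obtain ⟨K2, hK2B, hK2c, hK2v⟩ := hBm.exists_isCompact_lt_add hBfin hε2
  obtain ⟨a0, ha0⟩ := hAne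
  obtain ⟨b0, hb0⟩ := hBne
  set K1' : Set ℝ := K1 ∪ {a0} with hK1'
  set K2' : Set ℝ := K2 ∪ {b0} with hK2'
  have hK1'c : IsCompact K1' := hK1c.union isCompact_singleton
  have hK2'c : IsCompact K2' := hK2c.union isCompact_singleton
  have hK1'A : K1' ⊆ A := union_subset hK1A (by simpa using ha0)
  have hK2'B : K2' ⊆ B := union_subset hK2B (by simpa using hb0)
  -- scaled compacts
  have hsum : volume (l • K1') + volume ((1 - l) • K2')
      ≤ volume (l • K1' + (1 - l) • K2') :=
    sumset_one_dim _ _ (hK1'c.smul l) (hK2'c.smul (1 - l))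
      ((Set.Nonempty.smul_set (⟨a0, by simp [hK1']⟩ : K1'.Nonempty)))
      ((Set.Nonempty.smul_set (⟨b0, by simp [hK2']⟩ : K2'.Nonempty)))
  have hvol1 : volume (l • K1') = ENNReal.ofReal l * volume K1' := by
    rw [Measure.addHaar_smul]
    norm_num [abs_of_pos hl0]
  have hvol2 : volume ((1 - l) • K2') = ENNReal.ofReal (1 - l) * volume K2' := by
    rw [Measure.addHaar_smul]
    norm_num [abs_of_pos (by linarith : (0:ℝ) < 1 - l)]
  have hsubD : l • K1' + (1 - l) • K2' ⊆ D := by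
    rintro z ⟨u, ⟨x, hx, rfl⟩, v, ⟨y, hy, rfl⟩, rfl⟩
    exact hincl x (hK1'A hx) y (hK2'B hy)
  have key : ENNReal.ofReal l * volume K1' + ENNReal.ofReal (1 - l) * volume K2'
      ≤ volume D := by
    rw [← hvol1, ← hvol2]
    exact hsum.trans (measure_mono hsubD)
  have hA' : volume A ≤ volume K1' + ε / 2 :=
    (hK1v.le.trans (add_le_add_left (measure_mono subset_union_left) _))
  have hB' : volume B ≤ volume K2' + ε / 2 :=
    (hK2v.le.trans (add_le_add_left (measure_mono subset_union_left) _))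
  calc ENNReal.ofReal l * volume A + ENNReal.ofReal (1 - l) * volume B
      ≤ (ENNReal.ofReal l * volume K1' + ENNReal.ofReal (1 - l) * volume K2')
        + (ENNReal.ofReal l * (ε / 2) + ENNReal.ofReal (1 - l) * (ε / 2)) := by
        calc ENNReal.ofReal l * volume A + ENNReal.ofReal (1 - l) * volume B
            ≤ ENNReal.ofReal l * (volume K1' + ε / 2)
              + ENNReal.ofReal (1 - l) * (volume K2' + ε / 2) := by
              gcongr
          _ = _ := by ring
    _ ≤ volume D + ε := by
        refine add_le_add key ?_
        have h1 : ENNReal.ofReal l ≤ 1 := by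
          simpa using ENNReal.ofReal_le_ofReal hl1.le
        have h2 : ENNReal.ofReal (1 - l) ≤ 1 := by
          simpa using ENNReal.ofReal_le_ofReal (by linarith : (1:ℝ) - l ≤ 1)
        calc ENNReal.ofReal l * (ε / 2) + ENNReal.ofReal (1 - l) * (ε / 2)
            ≤ 1 * (ε / 2) + 1 * (ε / 2) := by gcongr
          _ = ε := by simp [ENNReal.add_halves]

lemma gm_le_am (l : ℝ) (hl0 : 0 < l) (hl1 : l < 1) (a b : ℝ≥0∞) :
    a ^ l * b ^ (1 - l) ≤ ENNReal.ofReal l * a + ENNReal.ofReal (1 - l) * b := by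
  have h1l : (0:ℝ) < 1 - l := by linarith
  rcases eq_or_ne a ⊤ with rfl | ha
  · have : ENNReal.ofReal l * ⊤ = ⊤ := by
      rw [ENNReal.mul_top]
      simp [ENNReal.ofReal_eq_zero, not_le.2 hl0]
    rw [this, top_add]
    exact le_top
  rcases eq_or_ne b ⊤ with rfl | hb
  · have : ENNReal.ofReal (1 - l) * ⊤ = ⊤ := by
      rw [ENNReal.mul_top]
      simp [ENNReal.ofReal_eq_zero, not_le.2 h1l]
    rw [this, add_top]
    exact le_top
  have hfinL : a ^ l * b ^ (1 - l) ≠ ⊤ :=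
    ENNReal.mul_ne_top (ENNReal.rpow_ne_top_of_nonneg hl0.le ha)
      (ENNReal.rpow_ne_top_of_nonneg h1l.le hb)
  have hfinR : ENNReal.ofReal l * a + ENNReal.ofReal (1 - l) * b ≠ ⊤ :=
    ENNReal.add_ne_top.2 ⟨ENNReal.mul_ne_top ENNReal.ofReal_ne_top ha,
      ENNReal.mul_ne_top ENNReal.ofReal_ne_top hb⟩
  rw [← ENNReal.toReal_le_toReal hfinL hfinR]
  rw [ENNReal.toReal_mul, ← ENNReal.toReal_rpow, ← ENNReal.toReal_rpow,
    ENNReal.toReal_add (ENNReal.mul_ne_top ENNReal.ofReal_ne_top ha)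
      (ENNReal.mul_ne_top ENNReal.ofReal_ne_top hb),
    ENNReal.toReal_mul, ENNReal.toReal_mul, ENNReal.toReal_ofReal hl0.le,
    ENNReal.toReal_ofReal h1l.le]
  exact Real.geom_mean_le_arith_mean2_weighted hl0.le h1l.le ENNReal.toReal_nonneg
    ENNReal.toReal_nonneg (by ring)

lemma indicator_section (E : Set (ℝ × ℝ)) (s x : ℝ) :
    E.indicator (fun _ => (1:ℝ≥0∞)) (s, x)
      = {x' | (s, x') ∈ E}.indicator (fun _ => (1:ℝ≥0∞)) x := rfl

lemma indicator_section' (E : Set (ℝ × ℝ)) (s x : ℝ) :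
    E.indicator (fun _ => (1:ℝ≥0∞)) (s, x)
      = {s' | (s', x) ∈ E}.indicator (fun _ => (1:ℝ≥0∞)) s := rfl

lemma layer_eq (f : ℝ → ℝ≥0∞) (hf : Measurable f) (S : ℝ≥0∞) (hS0 : S ≠ 0) (hST : S ≠ ⊤)
    (hfS : ∀ x, f x ≤ S) :
    ∫⁻ s in Ioo (0:ℝ) 1, volume {x | ENNReal.ofReal s * S < f x} = (∫⁻ x, f x) * S⁻¹ := by
  set E : Set (ℝ × ℝ) := {p | ENNReal.ofReal p.1 * S < f p.2} with hE
  have hEm : MeasurableSet E :=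
    measurableSet_lt ((ENNReal.measurable_ofReal.comp measurable_fst).mul_const S)
      (hf.comp measurable_snd)
  have hsec : ∀ s : ℝ, MeasurableSet {x | ENNReal.ofReal s * S < f x} :=
    fun s => measurableSet_lt measurable_const hf
  have hsec' : ∀ x : ℝ, MeasurableSet {s : ℝ | ENNReal.ofReal s * S < f x} :=
    fun x => measurableSet_lt (ENNReal.measurable_ofReal.mul_const S) measurable_const
  have hswap : ∫⁻ s in Ioo (0:ℝ) 1, volume {x | ENNReal.ofReal s * S < f x}
      = ∫⁻ x, (volume.restrict (Ioo (0:ℝ) 1)) {s | ENNReal.ofReal s * S < f x} := by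
    calc ∫⁻ s in Ioo (0:ℝ) 1, volume {x | ENNReal.ofReal s * S < f x}
        = ∫⁻ s in Ioo (0:ℝ) 1, ∫⁻ x, E.indicator (fun _ => (1:ℝ≥0∞)) (s, x) := by
          refine lintegral_congr fun s => ?_
          rw [← lintegral_indicator_one (hsec s)]
          refine lintegral_congr fun x => (indicator_section E s x)
      _ = ∫⁻ x, ∫⁻ s in Ioo (0:ℝ) 1, E.indicator (fun _ => (1:ℝ≥0∞)) (s, x) := by
          apply lintegral_lintegral_swap
          exact (measurable_one.indicator hEm).aemeasurable
      _ = ∫⁻ x, (volume.restrict (Ioo (0:ℝ) 1)) {s | ENNReal.ofReal s * S < f x} := by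
          refine lintegral_congr fun x => ?_
          rw [← lintegral_indicator_one (μ := volume.restrict (Ioo (0:ℝ) 1)) (hsec' x)]
          refine lintegral_congr fun s => (indicator_section' E s x)
  rw [hswap]
  have hpt : ∀ x : ℝ, (volume.restrict (Ioo (0:ℝ) 1)) {s | ENNReal.ofReal s * S < f x}
      = f x * S⁻¹ := by
    intro x
    rw [Measure.restrict_apply (hsec' x)]
    have hdivfin : f x / S ≠ ⊤ :=
      (ENNReal.div_lt_top (by exact ((hfS x).trans_lt (lt_top_iff_ne_top.2 hST)).ne) hS0).ne
    have hdivle : f x / S ≤ 1 := by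
      rw [ENNReal.div_le_iff hS0 hST, one_mul]
      exact hfS x
    set r : ℝ := (f x / S).toReal with hr
    have hr1 : r ≤ 1 := by
      rw [hr]
      calc (f x / S).toReal ≤ (1 : ℝ≥0∞).toReal := ENNReal.toReal_mono one_ne_top hdivle
        _ = 1 := by simp
    have hset : {s : ℝ | ENNReal.ofReal s * S < f x} ∩ Ioo (0:ℝ) 1 = Ioo 0 r := by
      ext s
      simp only [mem_inter_iff, mem_setOf_eq, mem_Ioo]
      constructor
      · rintro ⟨hlt, hs0, hs1⟩
        refine ⟨hs0, ?_⟩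
        have h1 : ENNReal.ofReal s < f x / S :=
          (ENNReal.lt_div_iff_mul_lt (Or.inl hS0) (Or.inl hST)).2 hlt
        have := (ENNReal.toReal_lt_toReal ENNReal.ofReal_ne_top hdivfin).2 h1
        rwa [ENNReal.toReal_ofReal hs0.le] at this
      · rintro ⟨hs0, hsr⟩
        have hs1 : s < 1 := lt_of_lt_of_le hsr hr1
        refine ⟨?_, hs0, hs1⟩
        have h1 : ENNReal.ofReal s < ENNReal.ofReal r := (ENNReal.ofReal_lt_ofReal_iff (hs0.trans hsr)).2 hsr
        rw [hr, ENNReal.ofReal_toReal hdivfin] at h1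
        exact (ENNReal.lt_div_iff_mul_lt (Or.inl hS0) (Or.inl hST)).1 h1
    rw [hset, Real.volume_Ioo]
    rw [sub_zero, hr, ENNReal.ofReal_toReal hdivfin, ENNReal.div_eq_inv_mul, mul_comm]
  calc ∫⁻ x, (volume.restrict (Ioo (0:ℝ) 1)) {s | ENNReal.ofReal s * S < f x}
      = ∫⁻ x, f x * S⁻¹ := lintegral_congr hpt
    _ = (∫⁻ x, f x) * S⁻¹ := lintegral_mul_const' _ _ (by simp [hS0])

lemma layer_le (h : ℝ → ℝ≥0∞) (hh : Measurable h) (T : ℝ≥0∞) (hT0 : T ≠ 0) (hTT : T ≠ ⊤) :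
    T * ∫⁻ s in Ioo (0:ℝ) 1, volume {z | ENNReal.ofReal s * T ≤ h z} ≤ ∫⁻ z, h z := by
  set E : Set (ℝ × ℝ) := {p | ENNReal.ofReal p.1 * T ≤ h p.2} with hE
  have hEm : MeasurableSet E :=
    measurableSet_le ((ENNReal.measurable_ofReal.comp measurable_fst).mul_const T)
      (hh.comp measurable_snd)
  have hsec : ∀ s : ℝ, MeasurableSet {z | ENNReal.ofReal s * T ≤ h z} :=
    fun s => measurableSet_le measurable_const hh
  have hsec' : ∀ z : ℝ, MeasurableSet {s : ℝ | ENNReal.ofReal s * T ≤ h z} :=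
    fun z => measurableSet_le (ENNReal.measurable_ofReal.mul_const T) measurable_const
  have hswap : ∫⁻ s in Ioo (0:ℝ) 1, volume {z | ENNReal.ofReal s * T ≤ h z}
      = ∫⁻ z, (volume.restrict (Ioo (0:ℝ) 1)) {s | ENNReal.ofReal s * T ≤ h z} := by
    calc ∫⁻ s in Ioo (0:ℝ) 1, volume {z | ENNReal.ofReal s * T ≤ h z}
        = ∫⁻ s in Ioo (0:ℝ) 1, ∫⁻ z, E.indicator (fun _ => (1:ℝ≥0∞)) (s, z) := by
          refine lintegral_congr fun s => ?_
          rw [← lintegral_indicator_one (hsec s)]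
          exact lintegral_congr fun z => (indicator_section E s z)
      _ = ∫⁻ z, ∫⁻ s in Ioo (0:ℝ) 1, E.indicator (fun _ => (1:ℝ≥0∞)) (s, z) := by
          apply lintegral_lintegral_swap
          exact (measurable_one.indicator hEm).aemeasurable
      _ = ∫⁻ z, (volume.restrict (Ioo (0:ℝ) 1)) {s | ENNReal.ofReal s * T ≤ h z} := by
          refine lintegral_congr fun z => ?_
          rw [← lintegral_indicator_one (μ := volume.restrict (Ioo (0:ℝ) 1)) (hsec' z)]
          exact lintegral_congr fun s => (indicator_section' E s z)
  rw [hswap, ← lintegral_const_mul' _ _ hTT]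
  refine lintegral_mono fun z => ?_
  rcases eq_or_ne (h z) ⊤ with hz | hz
  · rw [hz]; exact le_top
  rw [Measure.restrict_apply (hsec' z)]
  set r : ℝ := (h z / T).toReal with hr
  have hdivfin : h z / T ≠ ⊤ := (ENNReal.div_lt_top hz hT0).ne
  have hsub : {s : ℝ | ENNReal.ofReal s * T ≤ h z} ∩ Ioo (0:ℝ) 1 ⊆ Ioc 0 r := by
    rintro s ⟨hle, hs0, hs1⟩
    refine ⟨hs0, ?_⟩
    have h1 : ENNReal.ofReal s ≤ h z / T :=
      (ENNReal.le_div_iff_mul_le (Or.inl hT0) (Or.inl hTT)).2 hle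
    have := ENNReal.toReal_mono hdivfin h1
    rwa [ENNReal.toReal_ofReal hs0.le] at this
  calc T * (volume ({s : ℝ | ENNReal.ofReal s * T ≤ h z} ∩ Ioo (0:ℝ) 1))
      ≤ T * volume (Ioc (0:ℝ) r) := mul_le_mul_right (measure_mono hsub) T
    _ ≤ h z := by
        rw [Real.volume_Ioc, sub_zero, hr, ENNReal.ofReal_toReal hdivfin,
          ENNReal.mul_div_cancel hT0 hTT]

lemma PL_dim1 (l : ℝ) (hl0 : 0 < l) (hl1 : l < 1)
    (f g h : ℝ → ℝ≥0∞) (hf : Measurable f) (hg : Measurable g) (hh : Measurable h)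
    (M : ℝ≥0∞) (hM : M ≠ ⊤) (hfM : ∀ x, f x ≤ M) (hgM : ∀ x, g x ≤ M)
    (R : ℝ) (hfR : ∀ x, f x ≠ 0 → |x| ≤ R) (hgR : ∀ x, g x ≠ 0 → |x| ≤ R)
    (hyp : ∀ x y, f x ^ l * g y ^ (1 - l) ≤ h (l * x + (1 - l) * y)) :
    (∫⁻ x, f x) ^ l * (∫⁻ x, g x) ^ (1 - l) ≤ ∫⁻ x, h x := by
  have h1l : (0:ℝ) < 1 - l := by linarith
  set Sf : ℝ≥0∞ := ⨆ x, f x with hSf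
  set Sg : ℝ≥0∞ := ⨆ x, g x with hSg
  have hSfM : Sf ≤ M := iSup_le hfM
  have hSgM : Sg ≤ M := iSup_le hgM
  have hSfT : Sf ≠ ⊤ := (hSfM.trans_lt (lt_top_iff_ne_top.2 hM)).ne
  have hSgT : Sg ≠ ⊤ := (hSgM.trans_lt (lt_top_iff_ne_top.2 hM)).ne
  rcases eq_or_ne Sf 0 with hSf0 | hSf0
  · have hzero : ∀ x, f x = 0 := fun x => le_antisymm (hSf0 ▸ le_iSup f x) (zero_le)
    have hint : ∫⁻ x, f x = 0 := by simp only [hzero]; simp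
    rw [hint, ENNReal.zero_rpow_of_pos hl0, zero_mul]
    exact zero_le
  rcases eq_or_ne Sg 0 with hSg0 | hSg0
  · have hzero : ∀ x, g x = 0 := fun x => le_antisymm (hSg0 ▸ le_iSup g x) (zero_le)
    have hint : ∫⁻ x, g x = 0 := by simp only [hzero]; simp
    rw [hint, ENNReal.zero_rpow_of_pos h1l, mul_zero]
    exact zero_le
  -- main case
  have hfSf : ∀ x, f x ≤ Sf := fun x => le_iSup f x
  have hgSg : ∀ x, g x ≤ Sg := fun x => le_iSup g x
  set T : ℝ≥0∞ := Sf ^ l * Sg ^ (1 - l) with hT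
  have hT0 : T ≠ 0 := by
    simp only [hT, mul_ne_zero_iff]
    constructor <;> · rw [Ne, ENNReal.rpow_eq_zero_iff]; push_neg
                      constructor
                      · intro h'; exact absurd h' (by assumption)
                      · intro h'; exact absurd h' (by assumption)
  have hTT : T ≠ ⊤ := ENNReal.mul_ne_top (ENNReal.rpow_ne_top_of_nonneg hl0.le hSfT)
    (ENNReal.rpow_ne_top_of_nonneg h1l.le hSgT)
  -- finiteness of integrals
  have hbound : ∀ (u : ℝ → ℝ≥0∞), Measurable u → (∀ x, u x ≤ M) → (∀ x, u x ≠ 0 → |x| ≤ R)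
      → (∫⁻ x, u x) ≠ ⊤ := by
    intro u hu huM huR
    have : (∫⁻ x, u x) ≤ ∫⁻ x, (Icc (-R) R).indicator (fun _ => M) x := by
      refine lintegral_mono fun x => ?_
      rcases eq_or_ne (u x) 0 with h0 | h0
      · rw [h0]; exact zero_le
      · have hx : x ∈ Icc (-R) R := abs_le.1 (huR x h0)
        rw [indicator_of_mem hx]; exact huM x
    rw [lintegral_indicator measurableSet_Icc _,
      setLIntegral_const] at this
    exact (this.trans_lt (by
      exact ENNReal.mul_lt_top (lt_top_iff_ne_top.2 hM) (by simp [Real.volume_Icc] : volume (Icc (-R) R) < ⊤))).ne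
  have hFfin : (∫⁻ x, f x) ≠ ⊤ := hbound f hf hfM hfR
  have hGfin : (∫⁻ x, g x) ≠ ⊤ := hbound g hg hgM hgR
  -- level set inequality
  have key : ∀ s : ℝ, s ∈ Ioo (0:ℝ) 1 →
      ENNReal.ofReal l * volume {x | ENNReal.ofReal s * Sf < f x}
        + ENNReal.ofReal (1 - l) * volume {x | ENNReal.ofReal s * Sg < g x}
      ≤ volume {z | ENNReal.ofReal s * T ≤ h z} := by
    rintro s ⟨hs0, hs1⟩
    have hslt1 : ENNReal.ofReal s < 1 := by
      rw [← ENNReal.ofReal_one]; exact (ENNReal.ofReal_lt_ofReal_iff one_pos).2 hs1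
    refine sumset_scaled l hl0 hl1 _ _ _
      (measurableSet_lt measurable_const hf) (measurableSet_lt measurable_const hg)
      (measurableSet_le measurable_const hh) ?_ ?_ ?_ ?_ ?_
    · have : ENNReal.ofReal s * Sf < Sf := by
        calc ENNReal.ofReal s * Sf < 1 * Sf := ENNReal.mul_lt_mul_left hSf0 hSfT hslt1
          _ = Sf := one_mul _
      obtain ⟨x, hx⟩ := lt_iSup_iff.1 this
      exact ⟨x, hx⟩
    · have : ENNReal.ofReal s * Sg < Sg := by
        calc ENNReal.ofReal s * Sg < 1 * Sg := ENNReal.mul_lt_mul_left hSg0 hSgT hslt1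
          _ = Sg := one_mul _
      obtain ⟨x, hx⟩ := lt_iSup_iff.1 this
      exact ⟨x, hx⟩
    · refine ne_top_of_le_ne_top (by simp [Real.volume_Icc] : volume (Icc (-R) R) ≠ ⊤)
        (measure_mono fun x hx => ?_)
      refine abs_le.1 (hfR x ?_)
      intro h0
      rw [mem_setOf_eq, h0] at hx
      exact absurd hx (by simp)
    · refine ne_top_of_le_ne_top (by simp [Real.volume_Icc] : volume (Icc (-R) R) ≠ ⊤)
        (measure_mono fun x hx => ?_)
      refine abs_le.1 (hgR x ?_)
      intro h0
      rw [mem_setOf_eq, h0] at hx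
      exact absurd hx (by simp)
    · intro x hx y hy
      rw [mem_setOf_eq]
      calc ENNReal.ofReal s * T
          = (ENNReal.ofReal s) ^ l * (ENNReal.ofReal s) ^ (1 - l) * (Sf ^ l * Sg ^ (1 - l)) := by
            rw [← ENNReal.rpow_add _ _ (by simpa using hs0) ENNReal.ofReal_ne_top]
            norm_num
            rfl
        _ = (ENNReal.ofReal s * Sf) ^ l * (ENNReal.ofReal s * Sg) ^ (1 - l) := by
            rw [ENNReal.mul_rpow_of_nonneg _ _ hl0.le, ENNReal.mul_rpow_of_nonneg _ _ h1l.le]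
            ring
        _ ≤ f x ^ l * g y ^ (1 - l) := by
            exact mul_le_mul' (ENNReal.rpow_le_rpow (le_of_lt hx) hl0.le)
              (ENNReal.rpow_le_rpow (le_of_lt hy) h1l.le)
        _ ≤ h (l * x + (1 - l) * y) := hyp x y
  -- integrate
  have hmeasA : Measurable fun s : ℝ => volume {x | ENNReal.ofReal s * Sf < f x} := by
    have : ∀ s : ℝ, {x | ENNReal.ofReal s * Sf < f x} = Prod.mk s ⁻¹' {p : ℝ × ℝ | ENNReal.ofReal p.1 * Sf < f p.2} := fun s => rfl
    simp_rw [this]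
    exact measurable_measure_prodMk_left
      (measurableSet_lt ((ENNReal.measurable_ofReal.comp measurable_fst).mul_const Sf)
        (hf.comp measurable_snd))
  have step1 : ENNReal.ofReal l * ((∫⁻ x, f x) * Sf⁻¹)
      + ENNReal.ofReal (1 - l) * ((∫⁻ x, g x) * Sg⁻¹)
      ≤ ∫⁻ s in Ioo (0:ℝ) 1, volume {z | ENNReal.ofReal s * T ≤ h z} := by
    rw [← layer_eq f hf Sf hSf0 hSfT hfSf, ← layer_eq g hg Sg hSg0 hSgT hgSg,
      ← lintegral_const_mul' _ _ ENNReal.ofReal_ne_top,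
      ← lintegral_const_mul' _ _ ENNReal.ofReal_ne_top,
      ← lintegral_add_left (by exact (hmeasA.const_mul _)) ]
    exact setLIntegral_mono' measurableSet_Ioo key
  have step2 : T * (ENNReal.ofReal l * ((∫⁻ x, f x) * Sf⁻¹)
      + ENNReal.ofReal (1 - l) * ((∫⁻ x, g x) * Sg⁻¹)) ≤ ∫⁻ z, h z :=
    le_trans (mul_le_mul_right step1 T) (layer_le h hh T hT0 hTT)
  refine le_trans ?_ step2
  calc (∫⁻ x, f x) ^ l * (∫⁻ x, g x) ^ (1 - l)
      = T * (((∫⁻ x, f x) * Sf⁻¹) ^ l * (((∫⁻ x, g x) * Sg⁻¹) ^ (1 - l))) := by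
        rw [ENNReal.mul_rpow_of_nonneg _ _ hl0.le, ENNReal.mul_rpow_of_nonneg _ _ h1l.le,
          ENNReal.inv_rpow, ENNReal.inv_rpow, hT]
        rw [show ∀ a b c d e f' : ℝ≥0∞, a * b * (c * d⁻¹ * (e * f'⁻¹)) = (c * e) * ((a * d⁻¹) * (b * f'⁻¹)) from fun a b c d e f' => by ring]
        rw [ENNReal.mul_inv_cancel (by
            rw [Ne, ENNReal.rpow_eq_zero_iff]; push_neg
            exact ⟨fun h' => absurd h' hSf0, fun h' => absurd h' hSfT⟩)
          (ENNReal.rpow_ne_top_of_nonneg hl0.le hSfT),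
          ENNReal.mul_inv_cancel (by
            rw [Ne, ENNReal.rpow_eq_zero_iff]; push_neg
            exact ⟨fun h' => absurd h' hSg0, fun h' => absurd h' hSgT⟩)
          (ENNReal.rpow_ne_top_of_nonneg h1l.le hSgT), one_mul, mul_one]
    _ ≤ T * (ENNReal.ofReal l * ((∫⁻ x, f x) * Sf⁻¹)
        + ENNReal.ofReal (1 - l) * ((∫⁻ x, g x) * Sg⁻¹)) :=
      mul_le_mul_right (gm_le_am l hl0 hl1 _ _) T

lemma cons_linear {n : ℕ} (l : ℝ) (a b : ℝ) (w v : Fin n → ℝ) :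
    (Fin.cons (l * a + (1 - l) * b) (l • w + (1 - l) • v) : Fin (n+1) → ℝ)
      = l • (Fin.cons a w : Fin (n+1) → ℝ) + (1 - l) • (Fin.cons b v : Fin (n+1) → ℝ) := by
  funext j
  refine Fin.cases ?_ (fun i => ?_) j <;>
    simp [Pi.add_apply, Pi.smul_apply, smul_eq_mul]

lemma PL_pi : ∀ (n : ℕ) (l : ℝ), 0 < l → l < 1 →
    ∀ (f g h : (Fin n → ℝ) → ℝ≥0∞), Measurable f → Measurable g → Measurable h →
    ∀ (M : ℝ≥0∞), M ≠ ⊤ → (∀ x, f x ≤ M) → (∀ x, g x ≤ M) →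
    ∀ (R : ℝ), (∀ x, f x ≠ 0 → ∀ i, |x i| ≤ R) → (∀ x, g x ≠ 0 → ∀ i, |x i| ≤ R) →
    (∀ x y, f x ^ l * g y ^ (1 - l) ≤ h (l • x + (1 - l) • y)) →
    (∫⁻ x, f x) ^ l * (∫⁻ x, g x) ^ (1 - l) ≤ ∫⁻ x, h x := by
  intro n
  induction n with
  | zero =>
    intro l hl0 hl1 f g h hf hg hh M hM hfM hgM R hfR hgR hyp
    have huniv : (volume : Measure (Fin 0 → ℝ)) Set.univ = 1 := by
      simp [MeasureTheory.volume_pi, Measure.pi_univ]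
    rw [lintegral_unique, lintegral_unique, lintegral_unique, huniv, mul_one, mul_one, mul_one]
    have h2 := hyp default default
    have h3 : (l • (default : Fin 0 → ℝ) + (1 - l) • default) = default := Subsingleton.elim _ _
    rw [h3] at h2
    convert h2 using 5 <;> exact Subsingleton.elim _ _
  | succ n IH =>
    intro l hl0 hl1 f g h hf hg hh M hM hfM hgM R hfR hgR hyp
    have h1l : (0:ℝ) < 1 - l := by linarith
    set e := MeasurableEquiv.piFinSuccAbove (fun _ : Fin (n+1) => ℝ) 0 with he
    have hsymm : ∀ p : ℝ × (Fin n → ℝ), e.symm p = Fin.cons p.1 p.2 := by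
      intro p
      show (Fin.insertNthEquiv (fun _ : Fin (n+1) => ℝ) 0) p = _
      simp [Fin.insertNthEquiv, Fin.insertNth_zero']
    have mp : MeasurePreserving e volume ((volume : Measure ℝ).prod (volume : Measure (Fin n → ℝ))) :=
      volume_preserving_piFinSuccAbove (fun _ : Fin (n+1) => ℝ) 0
    have hcons : Measurable fun p : ℝ × (Fin n → ℝ) => (Fin.cons p.1 p.2 : Fin (n+1) → ℝ) := by
      have h1 := e.symm.measurable
      have : (fun p : ℝ × (Fin n → ℝ) => (Fin.cons p.1 p.2 : Fin (n+1) → ℝ)) = fun p => e.symm p := by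
        funext p; rw [hsymm]
      rw [this]; exact h1
    -- transfer integrals to the product space
    have hlift : ∀ (u : (Fin (n+1) → ℝ) → ℝ≥0∞), Measurable u →
        ∫⁻ x, u x = ∫⁻ a : ℝ, ∫⁻ w : Fin n → ℝ, u (Fin.cons a w) := by
      intro u hu
      have h1 : ∫⁻ x, u x = ∫⁻ p, (u ∘ e.symm) p ∂((volume : Measure ℝ).prod volume) := by
        calc ∫⁻ x, u x = ∫⁻ x, (u ∘ e.symm) (e x) := lintegral_congr fun x => by simp
          _ = _ := mp.lintegral_comp (hu.comp e.symm.measurable)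
      rw [h1, lintegral_prod _ ((hu.comp e.symm.measurable).aemeasurable)]
      refine lintegral_congr fun a => lintegral_congr fun w => ?_
      show u (e.symm (a, w)) = u (Fin.cons a w)
      rw [hsymm]
    set F : ℝ → ℝ≥0∞ := fun a => ∫⁻ w, f (Fin.cons a w) with hF
    set G : ℝ → ℝ≥0∞ := fun b => ∫⁻ w, g (Fin.cons b w) with hG
    set H : ℝ → ℝ≥0∞ := fun c => ∫⁻ w, h (Fin.cons c w) with hH
    have hfc : Measurable fun p : ℝ × (Fin n → ℝ) => f (Fin.cons p.1 p.2) := hf.comp hcons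
    have hgc : Measurable fun p : ℝ × (Fin n → ℝ) => g (Fin.cons p.1 p.2) := hg.comp hcons
    have hhc : Measurable fun p : ℝ × (Fin n → ℝ) => h (Fin.cons p.1 p.2) := hh.comp hcons
    have hFm : Measurable F := Measurable.lintegral_prod_right' (f := fun p : ℝ × (Fin n → ℝ) => f (Fin.cons p.1 p.2)) hfc
    have hGm : Measurable G := Measurable.lintegral_prod_right' (f := fun p : ℝ × (Fin n → ℝ) => g (Fin.cons p.1 p.2)) hgc
    have hHm : Measurable H := Measurable.lintegral_prod_right' (f := fun p : ℝ × (Fin n → ℝ) => h (Fin.cons p.1 p.2)) hhc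
    -- bound on marginals
    set M' : ℝ≥0∞ := M * (ENNReal.ofReal (R - -R)) ^ n with hM'
    have hM'T : M' ≠ ⊤ := ENNReal.mul_ne_top hM (by
      exact ENNReal.pow_ne_top ENNReal.ofReal_ne_top)
    have hbox : volume (Set.pi Set.univ fun _ : Fin n => Icc (-R) R)
        = (ENNReal.ofReal (R - -R)) ^ n := by
      rw [volume_pi_pi]
      simp [Real.volume_Icc]
    have hmarg : ∀ (u : (Fin (n+1) → ℝ) → ℝ≥0∞), (∀ x, u x ≤ M) →
        (∀ x, u x ≠ 0 → ∀ i, |x i| ≤ R) → ∀ a, (∫⁻ w, u (Fin.cons a w)) ≤ M' := by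
      intro u huM huR a
      have : (∫⁻ w, u (Fin.cons a w))
          ≤ ∫⁻ w, (Set.pi Set.univ fun _ : Fin n => Icc (-R) R).indicator (fun _ => M) w := by
        refine lintegral_mono fun w => ?_
        rcases eq_or_ne (u (Fin.cons a w)) 0 with h0 | h0
        · rw [h0]; exact zero_le
        · have hw : w ∈ Set.pi Set.univ fun _ : Fin n => Icc (-R) R := by
            intro i _
            have := huR _ h0 i.succ
            rw [Fin.cons_succ] at this
            exact abs_le.1 this
          rw [indicator_of_mem hw]
          exact huM _
      rw [lintegral_indicator (MeasurableSet.univ_pi fun _ => measurableSet_Icc) _,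
        setLIntegral_const, hbox] at this
      exact this
    -- support of marginals
    have hsupp : ∀ (u : (Fin (n+1) → ℝ) → ℝ≥0∞), (∀ x, u x ≠ 0 → ∀ i, |x i| ≤ R) →
        ∀ a, (∫⁻ w, u (Fin.cons a w)) ≠ 0 → |a| ≤ R := by
      intro u huR a ha
      by_contra hcon
      refine ha ?_
      have : ∀ w, u (Fin.cons a w) = 0 := by
        intro w
        by_contra h0
        exact hcon (by simpa [Fin.cons_zero] using huR _ h0 0)
      simp only [this]
      simp
    -- marginal hypothesis via IH
    have hypFG : ∀ a b : ℝ, F a ^ l * G b ^ (1 - l) ≤ H (l * a + (1 - l) * b) := by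
      intro a b
      refine IH l hl0 hl1 (fun w => f (Fin.cons a w)) (fun v => g (Fin.cons b v))
        (fun t => h (Fin.cons (l * a + (1 - l) * b) t))
        (hf.comp (hcons.comp (measurable_const.prodMk measurable_id)))
        (hg.comp (hcons.comp (measurable_const.prodMk measurable_id)))
        (hh.comp (hcons.comp (measurable_const.prodMk measurable_id)))
        M hM (fun w => hfM _) (fun v => hgM _) R ?_ ?_ ?_
      · intro w hw i
        have := hfR _ hw i.succ
        rwa [Fin.cons_succ] at this
      · intro v hv i
        have := hgR _ hv i.succ
        rwa [Fin.cons_succ] at this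
      · intro w v
        have hcl := hyp (Fin.cons a w) (Fin.cons b v)
        rw [← cons_linear] at hcl
        exact hcl
    -- apply dimension 1
    have main := PL_dim1 l hl0 hl1 F G H hFm hGm hHm M' hM'T
      (hmarg f hfM hfR) (hmarg g hgM hgR) R (hsupp f hfR) (hsupp g hgR) hypFG
    rw [hlift f hf, hlift g hg, hlift h hh]
    exact main

lemma coord_le_norm {n : ℕ} (v : EuclideanSpace ℝ (Fin n)) (i : Fin n) : |v i| ≤ ‖v‖ := by
  rw [EuclideanSpace.norm_eq]
  have h1 : |v i| = Real.sqrt (‖v i‖ ^ 2) := by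
    rw [Real.sqrt_sq_eq_abs]; simp [Real.norm_eq_abs, abs_abs]
  rw [h1]
  apply Real.sqrt_le_sqrt
  refine Finset.single_le_sum (f := fun j => ‖v j‖ ^ 2) (fun j _ => by positivity) (Finset.mem_univ i)

lemma bm_euclidean (n : ℕ) (l : ℝ) (hl0 : 0 < l) (hl1 : l < 1)
    (A B D : Set (EuclideanSpace ℝ (Fin n)))
    (hA : MeasurableSet A) (hB : MeasurableSet B) (hD : MeasurableSet D)
    (hAbd : Bornology.IsBounded A) (hBbd : Bornology.IsBounded B)
    (hincl : ∀ a ∈ A, ∀ b ∈ B, l • a + (1 - l) • b ∈ D) :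
    volume A ^ l * volume B ^ (1 - l) ≤ volume D := by
  set e := (MeasurableEquiv.toLp 2 (Fin n → ℝ)).symm with he
  have mp : MeasurePreserving e.symm volume volume :=
    (EuclideanSpace.volume_preserving_symm_measurableEquiv_toLp (Fin n)).symm
  have hvol : ∀ S : Set (EuclideanSpace ℝ (Fin n)), MeasurableSet S →
      volume (e.symm ⁻¹' S) = volume S := fun S hS => mp.measure_preimage hS.nullMeasurableSet
  obtain ⟨rA, hrA⟩ := hAbd.subset_closedBall 0
  obtain ⟨rB, hrB⟩ := hBbd.subset_closedBall 0
  set R : ℝ := max rA rB with hR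
  set f : (Fin n → ℝ) → ℝ≥0∞ := (e.symm ⁻¹' A).indicator 1 with hf
  set g : (Fin n → ℝ) → ℝ≥0∞ := (e.symm ⁻¹' B).indicator 1 with hg
  set h : (Fin n → ℝ) → ℝ≥0∞ := (e.symm ⁻¹' D).indicator 1 with hh
  have hlin : ∀ (c c' : ℝ) (x y : Fin n → ℝ),
      e.symm (c • x + c' • y) = c • e.symm x + c' • e.symm y := fun _ _ _ _ => rfl
  have key := PL_pi n l hl0 hl1 f g h
    (measurable_one.indicator (e.symm.measurable hA))
    (measurable_one.indicator (e.symm.measurable hB))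
    (measurable_one.indicator (e.symm.measurable hD))
    1 one_ne_top (fun x => by by_cases hx : x ∈ e.symm ⁻¹' A <;> simp [hf, hx])
    (fun x => by by_cases hx : x ∈ e.symm ⁻¹' B <;> simp [hg, hx])
    R ?_ ?_ ?_
  · rwa [lintegral_indicator_one (e.symm.measurable hA),
      lintegral_indicator_one (e.symm.measurable hB),
      lintegral_indicator_one (e.symm.measurable hD),
      hvol A hA, hvol B hB, hvol D hD] at key
  · intro x hx i
    have hmem : e.symm x ∈ A := by
      by_contra hc
      exact hx (by simp [hf, indicator_of_notMem, hc])
    have := hrA hmem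
    rw [Metric.mem_closedBall, dist_zero_right] at this
    have hco : |(e.symm x) i| ≤ rA := (coord_le_norm _ i).trans this
    have : |x i| ≤ rA := hco
    exact this.trans (le_max_left _ _)
  · intro x hx i
    have hmem : e.symm x ∈ B := by
      by_contra hc
      exact hx (by simp [hg, indicator_of_notMem, hc])
    have := hrB hmem
    rw [Metric.mem_closedBall, dist_zero_right] at this
    have hco : |(e.symm x) i| ≤ rB := (coord_le_norm _ i).trans this
    have : |x i| ≤ rB := hco
    exact this.trans (le_max_right _ _)
  · intro x y
    by_cases hx : e.symm x ∈ A
    · by_cases hy : e.symm y ∈ B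
      · have hD' : e.symm (l • x + (1 - l) • y) ∈ D := by
          rw [hlin]
          exact hincl _ hx _ hy
        calc f x ^ l * g y ^ (1 - l) ≤ 1 := by
              simp [hf, hg, indicator_of_mem, hx, hy, ENNReal.one_rpow]
          _ = h (l • x + (1 - l) • y) := by simp [hh, indicator_of_mem, hD']
      · have : g y = 0 := by simp [hg, indicator_of_notMem, hy]
        rw [this, ENNReal.zero_rpow_of_pos (by linarith), mul_zero]
        exact zero_le
    · have : f x = 0 := by simp [hf, indicator_of_notMem, hx]
      rw [this, ENNReal.zero_rpow_of_pos hl0, zero_mul]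
      exact zero_le

lemma final_real (L t : ℝ) (hL : 0 < L) (ht : 4 * L ≤ t) :
    (1/2 : ℝ) ^ (t / (4*L)) ≤ (3:ℝ) ^ (-(t/(8*L))) := by
  have ht0 : 0 < t := lt_of_lt_of_le (by positivity) ht
  have ha : 0 < t/(8*L) := by positivity
  have h1 : t / (4*L) = (2:ℝ) * (t/(8*L)) := by field_simp; ring
  rw [h1, Real.rpow_mul (by norm_num : (0:ℝ) ≤ 1/2)]
  have h2 : (1/2 : ℝ) ^ (2:ℝ) = 1/4 := by
    rw [show ((2:ℝ)) = ((2:ℕ):ℝ) by norm_num, Real.rpow_natCast]; norm_num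
  rw [h2]
  have h3 : (3:ℝ) ^ (-(t/(8*L))) = (1/3 : ℝ) ^ (t/(8*L)) := by
    rw [Real.rpow_neg (by norm_num : (0:ℝ) ≤ 3), one_div, Real.inv_rpow (by norm_num : (0:ℝ) ≤ 3)]
  rw [h3]
  exact Real.rpow_le_rpow (by norm_num) (by norm_num) ha.le

theorem isotropic_overlap_small (n : ℕ) (K : Set (EuclideanSpace ℝ (Fin n)))
    (hKconv : Convex ℝ K) (hKcomp : IsCompact K) (hKint : (interior K).Nonempty)
    (hKvol : volume K = 1)
    (hKbary : ∫ y in K, y = (0 : EuclideanSpace ℝ (Fin n)))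
    (L : ℝ) (hL : 0 < L)
    (hKiso : ∀ z : EuclideanSpace ℝ (Fin n), ∫ y in K, (⟪y, z⟫) ^ 2 = L ^ 2 * ‖z‖ ^ 2)
    (x : EuclideanSpace ℝ (Fin n)) (hx : 4 * L ≤ ‖x‖) :
    (volume (K ∩ (fun y => y + x) '' K)).toReal ≤ (3 : ℝ) ^ (-(‖x‖ / (8 * L))) := by
  have ht0 : 0 < ‖x‖ := lt_of_lt_of_le (by positivity) hx
  set t : ℝ := ‖x‖ with htdef
  set θ : EuclideanSpace ℝ (Fin n) := ‖x‖⁻¹ • x with hθdef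
  have hθnorm : ‖θ‖ = 1 := by
    rw [hθdef, norm_smul, Real.norm_eq_abs, abs_of_pos (inv_pos.2 ht0)]
    field_simp
    rfl
  have hiso : ∫ y in K, (⟪y, θ⟫) ^ 2 = L ^ 2 := by
    rw [hKiso θ, hθnorm]; ring
  have hxθ : ⟪x, θ⟫ = t := by
    rw [hθdef, real_inner_smul_right, real_inner_self_eq_norm_mul_norm]
    field_simp
    rfl
  set c : ℝ := 4 * L / t with hcdef
  have hc0 : 0 < c := by positivity
  have hc1 : c ≤ 1 := by
    rw [hcdef, div_le_one ht0]; exact hx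
  set w : EuclideanSpace ℝ (Fin n) := c • x with hwdef
  have hwθ : ⟪w, θ⟫ = 4 * L := by
    rw [hwdef, real_inner_smul_left, hxθ, hcdef]
    field_simp
  have himg : ∀ v : EuclideanSpace ℝ (Fin n),
      (fun y => y + v) '' K = {y | y - v ∈ K} := by
    intro v
    ext y
    constructor
    · rintro ⟨k, hk, rfl⟩
      simpa using hk
    · intro hy
      exact ⟨y - v, hy, by simp⟩
  rw [himg x]
  set A : Set (EuclideanSpace ℝ (Fin n)) := K ∩ {y | y - x ∈ K} with hAdef
  set C : Set (EuclideanSpace ℝ (Fin n)) := K ∩ {y | y - w ∈ K} with hCdef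
  have hKmeas : MeasurableSet K := hKcomp.measurableSet
  have hsubmeas : ∀ v : EuclideanSpace ℝ (Fin n), MeasurableSet {y | y - v ∈ K} :=
    fun v => (measurable_id.sub measurable_const) hKmeas
  have hmA : MeasurableSet A := hKmeas.inter (hsubmeas x)
  have hmC : MeasurableSet C := hKmeas.inter (hsubmeas w)
  -- Chebyshev
  set S : Set (EuclideanSpace ℝ (Fin n)) := {y | y ∈ K ∧ 4 * L ^ 2 ≤ (⟪y, θ⟫) ^ 2} with hSdef
  have hcont : Continuous fun y : EuclideanSpace ℝ (Fin n) => (⟪y, θ⟫) ^ 2 :=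
    ((continuous_id.inner continuous_const)).pow 2
  have hSvol : volume S ≤ ENNReal.ofReal (1 / 4) := by
    have hint : IntegrableOn (fun y : EuclideanSpace ℝ (Fin n) => (⟪y, θ⟫) ^ 2) K volume :=
      hcont.continuousOn.integrableOn_compact hKcomp
    have hmark := mul_meas_ge_le_integral_of_nonneg
      (μ := volume.restrict K) (f := fun y => (⟪y, θ⟫) ^ 2)
      (Filter.Eventually.of_forall fun y => sq_nonneg _) hint (4 * L ^ 2)
    rw [hiso] at hmark
    have hset : (volume.restrict K) {y | 4 * L ^ 2 ≤ (⟪y, θ⟫) ^ 2} = volume S := by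
      rw [Measure.restrict_apply (measurableSet_le measurable_const hcont.measurable)]
      congr 1
      ext y; simp [hSdef, and_comm]
    rw [measureReal_def, hset] at hmark
    have hfin : volume S ≠ ⊤ := by
      refine ne_top_of_le_ne_top (by rw [hKvol]; exact one_ne_top) (measure_mono ?_)
      intro y hy; exact hy.1
    rw [ENNReal.le_ofReal_iff_toReal_le hfin (by norm_num)]
    have h4 : (0:ℝ) < 4 * L ^ 2 := by positivity
    nlinarith [ENNReal.toReal_nonneg (a := volume S)]
  have hCsub : C ⊆ S ∪ (w +ᵥ S) := by
    rintro y ⟨hyK, hyw⟩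
    by_cases hbig : 4 * L ^ 2 ≤ (⟪y, θ⟫) ^ 2
    · exact Or.inl ⟨hyK, hbig⟩
    · refine Or.inr ⟨y - w, ⟨hyw, ?_⟩, by simp⟩
      push_neg at hbig
      have hv : ⟪y, θ⟫ < 2 * L := by nlinarith [le_abs_self (⟪y, θ⟫), sq_abs (⟪y, θ⟫), abs_nonneg (⟪y, θ⟫)]
      have h2 : ⟪y - w, θ⟫ = ⟪y, θ⟫ - 4 * L := by rw [inner_sub_left, hwθ]
      rw [h2]
      nlinarith
  have hCvol : volume C ≤ ENNReal.ofReal (1 / 2) := by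
    calc volume C ≤ volume (S ∪ (w +ᵥ S)) := measure_mono hCsub
      _ ≤ volume S + volume (w +ᵥ S) := measure_union_le _ _
      _ = volume S + volume S := by rw [measure_vadd]
      _ ≤ ENNReal.ofReal (1 / 4) + ENNReal.ofReal (1 / 4) := add_le_add hSvol hSvol
      _ = ENNReal.ofReal (1 / 2) := by
          rw [← ENNReal.ofReal_add (by norm_num) (by norm_num)]; norm_num
  have hAfin : volume A ≠ ⊤ := by
    refine ne_top_of_le_ne_top (by rw [hKvol]; exact one_ne_top)
      (measure_mono inter_subset_left)
  -- combine
  have hmain : (volume A).toReal ≤ (1/2 : ℝ) ^ (t / (4 * L)) := by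
    rcases eq_or_lt_of_le hc1 with hceq | hclt
    · -- c = 1, i.e. t = 4L
      have htL : t = 4 * L := by
        rw [hcdef] at hceq
        field_simp [hcdef] at hceq
        linarith
      have hwx : w = x := by rw [hwdef, hceq, one_smul]
      have hAC : A = C := by rw [hAdef, hCdef, hwx]
      have h1 : (volume A).toReal ≤ 1 / 2 := by
        rw [hAC]
        have := hCvol
        have hCfin : volume C ≠ ⊤ := by
          refine ne_top_of_le_ne_top (by rw [hKvol]; exact one_ne_top)
            (measure_mono inter_subset_left)
        calc (volume C).toReal ≤ (ENNReal.ofReal (1/2)).toReal :=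
              ENNReal.toReal_mono ENNReal.ofReal_ne_top hCvol
          _ = 1/2 := by rw [ENNReal.toReal_ofReal]; norm_num
      rw [htL]
      have : (4 * L) / (4 * L) = (1:ℝ) := by field_simp
      rw [this, Real.rpow_one]
      exact h1
    · -- c < 1 : Brunn-Minkowski
      have hincl : ∀ a ∈ A, ∀ k ∈ K, c • a + (1 - c) • k ∈ C := by
        rintro a ⟨haK, hax⟩ k hk
        constructor
        · exact hKconv haK hk hc0.le (by linarith) (by ring)
        · show c • a + (1 - c) • k - w ∈ K
          have heq : c • a + (1 - c) • k - w = c • (a - x) + (1 - c) • k := by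
            rw [hwdef]; module
          rw [heq]
          exact hKconv hax hk hc0.le (by linarith) (by ring)
      have hbm := bm_euclidean n c hc0 hclt A K C hmA hKmeas hmC
        (hKcomp.isBounded.subset inter_subset_left) hKcomp.isBounded hincl
      rw [hKvol, ENNReal.one_rpow, mul_one] at hbm
      have hAle : volume A ≤ (ENNReal.ofReal (1 / 2)) ^ c⁻¹ := by
        have h1 : volume A = (volume A ^ c) ^ c⁻¹ := by
          rw [← ENNReal.rpow_mul, mul_inv_cancel₀ hc0.ne', ENNReal.rpow_one]
        rw [h1]
        exact ENNReal.rpow_le_rpow (hbm.trans hCvol) (by positivity)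
      have h2 : (volume A).toReal ≤ ((ENNReal.ofReal (1 / 2)) ^ c⁻¹).toReal :=
        ENNReal.toReal_mono (ENNReal.rpow_ne_top_of_nonneg (by positivity) ENNReal.ofReal_ne_top) hAle
      have h3 : ((ENNReal.ofReal (1 / 2)) ^ c⁻¹).toReal = (1/2 : ℝ) ^ c⁻¹ := by
        rw [← ENNReal.toReal_rpow, ENNReal.toReal_ofReal (by norm_num)]
      have h4 : c⁻¹ = t / (4 * L) := by
        rw [hcdef]; field_simp
      rw [h3, h4] at h2
      exact h2
  calc (volume A).toReal ≤ (1/2 : ℝ) ^ (t / (4 * L)) := hmain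
    _ ≤ (3:ℝ) ^ (-(t/(8*L))) := final_real L t hL hx
    _ = (3:ℝ) ^ (-(‖x‖/(8*L))) := rfl
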